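/- Assume l_j > 0 for all j, the q_j > 0 are pairwise distinct, and q_n < max_{1≤j≤n−1} q_j. Then g₁'(β) = ∑_{j=1}^{n−1} l_j q_j ψ'(β q_j) − l_n q_n ψ'(β q_n) tends to −∞ as β tends to β_max = φ'(0)/max_j q_j from the left. -/

import Mathlib

open scoped BigOperators
open Filter Set Topology

/-- Under (A1), with `lⱼ > 0`, `qⱼ > 0` pairwise distinct and the last
`q` not the maximal one, `g₁'(β) = ∑_{j≠n} lⱼ qⱼ ψ'(β qⱼ) − lₙ qₙ ψ'(β qₙ)` tends to
`−∞` as `β → β_max⁻`, where `β_max = φ'(0)/max_j qⱼ`. -/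
theorem stmt_7 (n : ℕ) (hn : 1 ≤ n) (φ ψ : ℝ → ℝ)
    (hφC : ContDiff ℝ 2 φ)
    (hodd : ∀ x : ℝ, φ (-x) = -φ x)
    (hφ' : ∀ x : ℝ, 0 < deriv φ x)
    (hφ'' : ∀ x : ℝ, x ≠ 0 → x * deriv (deriv φ) x < 0)
    (hlim : ∃ L : ℝ, Filter.Tendsto φ Filter.atTop (nhds L))
    (hψ : ∀ y : ℝ, 0 < y → y ≤ deriv φ 0 → 0 ≤ ψ y ∧ deriv φ (ψ y) = y)
    (hψinv : ∀ x : ℝ, 0 ≤ x → ψ (deriv φ x) = x)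
    (l q : Fin (n + 1) → ℝ) (hl : ∀ j, 0 < l j) (hqpos : ∀ j, 0 < q j)
    (hqinj : Function.Injective q)
    (hqn : ∃ j, j ≠ Fin.last n ∧ q (Fin.last n) < q j)
    (βmax : ℝ) (hβmax : βmax = deriv φ 0 / Finset.univ.sup' Finset.univ_nonempty q)
    (G : ℝ → ℝ)
    (hG : ∀ β : ℝ, G β =
      (∑ j ∈ Finset.univ.erase (Fin.last n), l j * q j * deriv ψ (β * q j)) -
        l (Fin.last n) * q (Fin.last n) * deriv ψ (β * q (Fin.last n))) :
    Filter.Tendsto G (nhdsWithin βmax (Set.Iio βmax)) Filter.atBot := by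
  classical
  set c := deriv φ 0 with hc
  have hcpos : 0 < c := hφ' 0
  -- smoothness facts
  have h1 : ContDiff ℝ 1 (deriv φ) := by
    have h := hφC
    rw [show (2 : WithTop ℕ∞) = 1 + 1 by norm_num] at h
    exact (contDiff_succ_iff_deriv.mp h).2.2
  have hφ'diff : Differentiable ℝ (deriv φ) := h1.differentiable one_ne_zero
  have hφ'cont : Continuous (deriv φ) := h1.continuous
  have hφ''cont : Continuous (deriv (deriv φ)) := h1.continuous_deriv le_rfl
  -- sign of second derivative
  have hneg : ∀ x : ℝ, 0 < x → deriv (deriv φ) x < 0 := by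
    intro x hx
    nlinarith [hφ'' x hx.ne']
  have hpos : ∀ x : ℝ, x < 0 → 0 < deriv (deriv φ) x := by
    intro x hx
    nlinarith [hφ'' x hx.ne]
  have hφ''0 : deriv (deriv φ) 0 = 0 := by
    have hle : deriv (deriv φ) 0 ≤ 0 := by
      refine le_of_tendsto (hφ''cont.continuousAt.mono_left nhdsWithin_le_nhds)
        (eventually_nhdsWithin_of_forall (s := Ioi (0:ℝ)) ?_)
      exact fun x hx => (hneg x hx).le
    have hge : 0 ≤ deriv (deriv φ) 0 := by
      refine ge_of_tendsto (hφ''cont.continuousAt.mono_left nhdsWithin_le_nhds)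
        (eventually_nhdsWithin_of_forall (s := Iio (0:ℝ)) ?_)
      exact fun x hx => (hpos x hx).le
    linarith
  -- φ' strictly decreasing on [0,∞)
  have hanti : StrictAntiOn (deriv φ) (Ici 0) := by
    refine strictAntiOn_of_deriv_neg (convex_Ici 0) hφ'cont.continuousOn ?_
    intro x hx
    rw [interior_Ici] at hx
    exact hneg x hx
  have hlt_c : ∀ x : ℝ, 0 < x → deriv φ x < c := fun x hx =>
    hanti (le_refl (α := ℝ) 0) hx.le hx
  -- ψ positive on (0, c)
  have hψpos : ∀ y : ℝ, 0 < y → y < c → 0 < ψ y := by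
    intro y hy hyc
    obtain ⟨h0, heq⟩ := hψ y hy hyc.le
    rcases h0.eq_or_lt with h | h
    · exfalso; rw [← h] at heq; rw [← heq] at hyc; exact absurd hyc (lt_irrefl _)
    · exact h
  -- ψ is strictly antitone on (0, c]
  have hψanti : StrictAntiOn ψ (Ioc 0 c) := by
    intro y1 hy1 y2 hy2 h12
    obtain ⟨h01, he1⟩ := hψ y1 hy1.1 hy1.2
    obtain ⟨h02, he2⟩ := hψ y2 hy2.1 hy2.2
    rcases lt_trichotomy (ψ y2) (ψ y1) with h | h | h
    · exact h
    · exfalso; rw [← he1, ← he2, h] at h12; exact absurd h12 (lt_irrefl _)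
    · exfalso
      have := hanti h01 h02 h
      rw [he1, he2] at this
      exact absurd h12 (not_lt.mpr this.le)
  -- image of ψ on (0, c] is [0, ∞)
  have hψc : ψ c = 0 := hψinv 0 le_rfl
  have hψimg : ψ '' (Ioc 0 c) = Ici 0 := by
    apply Subset.antisymm
    · rintro _ ⟨y, hy, rfl⟩
      exact (hψ y hy.1 hy.2).1
    · rintro x (hx : 0 ≤ x)
      refine ⟨deriv φ x, ⟨hφ' x, ?_⟩, hψinv x hx⟩
      rcases hx.eq_or_lt with h | h
      · rw [← h]
      · exact (hlt_c x h).le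
  -- continuity of ψ at interior points via the negated strictly monotone function
  have hnegmono : StrictMonoOn (fun y => -ψ y) (Ioc 0 c) := by
    intro y1 h1' y2 h2' h12
    simpa using hψanti h1' h2' h12
  have hψcontAt : ∀ y ∈ Ioo 0 c, ContinuousAt ψ y := by
    intro y hy
    have hs : Ioc 0 c ∈ 𝓝 y := mem_of_superset (isOpen_Ioo.mem_nhds hy) Ioo_subset_Ioc_self
    have himg : (fun y => -ψ y) '' (Ioc 0 c) ∈ 𝓝 (-ψ y) := by
      have : (fun y => -ψ y) '' (Ioc 0 c) = Iic 0 := by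
        rw [show (fun y => -ψ y) = (fun z => -z) ∘ ψ from rfl, image_comp, hψimg]
        ext z; simp [neg_le]
      rw [this]
      exact mem_of_superset (Iio_mem_nhds (neg_neg_iff_pos.mpr (hψpos y hy.1 hy.2)))
        Iio_subset_Iic_self
    have := hnegmono.continuousAt_of_image_mem_nhds hs himg
    have h2 : ContinuousAt (fun y => -(-ψ y)) y := this.neg
    simpa using h2
  -- continuity of ψ from the left at c : ψ → 0
  have hψ_left : Tendsto ψ (𝓝[<] c) (𝓝 0) := by
    have hs : Ioc 0 c ∈ 𝓝[≤] c := by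
      rw [← Ioi_inter_Iic]
      exact inter_mem (nhdsWithin_le_nhds (Ioi_mem_nhds hcpos)) self_mem_nhdsWithin
    have himg : (fun y => -ψ y) '' (Ioc 0 c) ∈ 𝓝[≤] (-ψ c) := by
      have he : (fun y => -ψ y) '' (Ioc 0 c) = Iic 0 := by
        rw [show (fun y => -ψ y) = (fun z => -z) ∘ ψ from rfl, image_comp, hψimg]
        ext z; simp [neg_le]
      rw [he, hψc, neg_zero]
      exact self_mem_nhdsWithin
    have hcont := hnegmono.continuousWithinAt_left_of_image_mem_nhdsWithin hs himg
    have hcont2 : ContinuousWithinAt ψ (Iic c) c := by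
      have : ContinuousWithinAt (fun y => -(-ψ y)) (Iic c) c := hcont.neg
      simpa using this
    have := hcont2.tendsto
    rw [hψc] at this
    exact this.mono_left (nhdsWithin_mono _ Iio_subset_Iic_self)
  -- derivative formula for ψ on (0, c)
  have hψderiv : ∀ y ∈ Ioo 0 c, deriv ψ y = (deriv (deriv φ) (ψ y))⁻¹ := by
    intro y hy
    have hψy : 0 < ψ y := hψpos y hy.1 hy.2
    have hfd : HasDerivAt (deriv φ) (deriv (deriv φ) (ψ y)) (ψ y) :=
      (hφ'diff (ψ y)).hasDerivAt
    have hne : deriv (deriv φ) (ψ y) ≠ 0 := (hneg _ hψy).ne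
    have hev : ∀ᶠ z in 𝓝 y, deriv φ (ψ z) = z := by
      filter_upwards [isOpen_Ioo.mem_nhds hy] with z hz
      exact (hψ z hz.1 hz.2.le).2
    exact (HasDerivAt.of_local_left_inverse (hψcontAt y hy) hfd hne hev).deriv
  -- setup for the maximum
  set M := Finset.univ.sup' Finset.univ_nonempty q with hM
  obtain ⟨j0, _, hj0eq⟩ := Finset.exists_mem_eq_sup' Finset.univ_nonempty q
  rw [← hM] at hj0eq
  have hMpos : 0 < M := hj0eq ▸ hqpos j0
  have hβpos : 0 < βmax := by rw [hβmax]; exact div_pos hcpos hMpos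
  have hβM : βmax * M = c := by
    rw [hβmax, div_mul_cancel₀ _ hMpos.ne']
  have hlast_lt : q (Fin.last n) < M := by
    obtain ⟨j, hjne, hjlt⟩ := hqn
    exact lt_of_lt_of_le hjlt (Finset.le_sup' q (Finset.mem_univ j))
  have hj0ne : j0 ≠ Fin.last n := by
    intro h
    rw [← h, ← hj0eq] at hlast_lt
    exact absurd hlast_lt (lt_irrefl _)
  have hqle : ∀ j, q j ≤ M := fun j => Finset.le_sup' q (Finset.mem_univ j)
  have hqlt : ∀ j, j ≠ j0 → q j < M := by
    intro j hj
    rcases (hqle j).eq_or_lt with h | h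
    · exact absurd (hqinj (h.trans hj0eq)) hj
    · exact h
  set L := 𝓝[<] βmax with hL
  -- Claim A: for j with q j < M, deriv ψ (β * q j) converges to a finite limit
  have claimA : ∀ j : Fin (n+1), q j < M →
      Tendsto (fun β => deriv ψ (β * q j)) L
        (𝓝 ((deriv (deriv φ) (ψ (βmax * q j)))⁻¹)) := by
    intro j hj
    have hy0 : βmax * q j ∈ Ioo 0 c := by
      constructor
      · exact mul_pos hβpos (hqpos j)
      · calc βmax * q j < βmax * M := by
              exact mul_lt_mul_of_pos_left hj hβpos
          _ = c := hβM
    have htend : Tendsto (fun β => β * q j) L (𝓝 (βmax * q j)) := by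
      exact (Filter.tendsto_id.mul_const (q j)).mono_left nhdsWithin_le_nhds
    have hev : ∀ᶠ β in L, (β * q j) ∈ Ioo 0 c :=
      htend (isOpen_Ioo.mem_nhds hy0)
    have hkey : Tendsto (fun β => (deriv (deriv φ) (ψ (β * q j)))⁻¹) L
        (𝓝 ((deriv (deriv φ) (ψ (βmax * q j)))⁻¹)) := by
      have hψt : Tendsto (fun β => ψ (β * q j)) L (𝓝 (ψ (βmax * q j))) :=
        (hψcontAt _ hy0).tendsto.comp htend
      have h2 : Tendsto (fun β => deriv (deriv φ) (ψ (β * q j))) L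
          (𝓝 (deriv (deriv φ) (ψ (βmax * q j)))) :=
        hφ''cont.continuousAt.tendsto.comp hψt
      exact h2.inv₀ (hneg _ (hψpos _ hy0.1 hy0.2)).ne
    refine hkey.congr' ?_
    filter_upwards [hev] with β hβ
    exact (hψderiv _ hβ).symm
  -- Claim B: the term for j0 tends to -∞
  have claimB : Tendsto (fun β => deriv ψ (β * q j0)) L atBot := by
    rw [← hj0eq]
    have htend : Tendsto (fun β => β * M) L (𝓝[<] c) := by
      rw [tendsto_nhdsWithin_iff]
      constructor
      · rw [← hβM]
        exact (Filter.tendsto_id.mul_const M).mono_left nhdsWithin_le_nhds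
      · filter_upwards [self_mem_nhdsWithin] with β (hβ : β < βmax)
        exact mem_Iio.mpr (hβM ▸ mul_lt_mul_of_pos_right hβ hMpos)
    have hev : ∀ᶠ β in L, (β * M) ∈ Ioo 0 c := by
      have h1 : ∀ᶠ β in L, 0 < β := by
        have : Ioi (0:ℝ) ∈ 𝓝 βmax := Ioi_mem_nhds hβpos
        exact nhdsWithin_le_nhds this
      have h2 : ∀ᶠ β in L, β * M < c := by
        filter_upwards [self_mem_nhdsWithin] with β (hβ : β < βmax)
        exact hβM ▸ mul_lt_mul_of_pos_right hβ hMpos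
      filter_upwards [h1, h2] with β hb1 hb2
      exact ⟨mul_pos hb1 hMpos, hb2⟩
    -- ψ(β M) → 0 within (0, ∞)
    have hψt : Tendsto (fun β => ψ (β * M)) L (𝓝[>] 0) := by
      rw [tendsto_nhdsWithin_iff]
      refine ⟨hψ_left.comp htend, ?_⟩
      filter_upwards [hev] with β hβ
      exact mem_Ioi.mpr (hψpos _ hβ.1 hβ.2)
    -- φ''(ψ(β M)) → 0 within (-∞, 0)
    have hφ''t : Tendsto (fun β => deriv (deriv φ) (ψ (β * M))) L (𝓝[<] 0) := by
      rw [tendsto_nhdsWithin_iff]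
      constructor
      · have := hφ''cont.continuousAt.tendsto.comp (hψt.mono_right nhdsWithin_le_nhds)
        rwa [hφ''0] at this
      · filter_upwards [hψt self_mem_nhdsWithin] with β (hβ : 0 < ψ (β * M))
        exact mem_Iio.mpr (hneg _ hβ)
    -- inversion: z → 0⁻ implies z⁻¹ → -∞
    have hinv : Tendsto (fun z : ℝ => z⁻¹) (𝓝[<] (0:ℝ)) atBot := by
      have h1 : Tendsto (fun z : ℝ => -z) (𝓝[<] (0:ℝ)) (𝓝[>] (0:ℝ)) := by
        rw [tendsto_nhdsWithin_iff]
        constructor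
        · have : Tendsto (fun z : ℝ => -z) (𝓝 (0:ℝ)) (𝓝 (-0:ℝ)) := tendsto_neg _
          rw [neg_zero] at this
          exact this.mono_left nhdsWithin_le_nhds
        · filter_upwards [self_mem_nhdsWithin] with z (hz : z < 0)
          exact mem_Ioi.mpr (neg_pos.mpr hz)
      have h2 : Tendsto (fun z : ℝ => ((-z)⁻¹ : ℝ)) (𝓝[<] (0:ℝ)) atTop :=
        tendsto_inv_nhdsGT_zero.comp h1
      have h3 : Tendsto (fun z : ℝ => (-(-z)⁻¹ : ℝ)) (𝓝[<] (0:ℝ)) atBot :=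
        tendsto_neg_atBot_iff.mpr h2
      refine h3.congr fun z => ?_
      rw [inv_neg, neg_neg]
    have hcomp : Tendsto (fun β => (deriv (deriv φ) (ψ (β * M)))⁻¹) L atBot :=
      hinv.comp hφ''t
    refine hcomp.congr' ?_
    filter_upwards [hev] with β hβ
    exact (hψderiv _ hβ).symm
  -- combine
  have hj0mem : j0 ∈ Finset.univ.erase (Fin.last n) :=
    Finset.mem_erase.mpr ⟨hj0ne, Finset.mem_univ j0⟩
  have hGsplit : ∀ β : ℝ, G β = l j0 * q j0 * deriv ψ (β * q j0) +
      ((∑ j ∈ (Finset.univ.erase (Fin.last n)).erase j0,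
        l j * q j * deriv ψ (β * q j)) -
        l (Fin.last n) * q (Fin.last n) * deriv ψ (β * q (Fin.last n))) := by
    intro β
    rw [hG β, ← Finset.add_sum_erase _ _ hj0mem]
    ring
  -- the rest converges to a finite limit
  have hrest : Tendsto (fun β =>
      (∑ j ∈ (Finset.univ.erase (Fin.last n)).erase j0,
        l j * q j * deriv ψ (β * q j)) -
        l (Fin.last n) * q (Fin.last n) * deriv ψ (β * q (Fin.last n))) L
      (𝓝 ((∑ j ∈ (Finset.univ.erase (Fin.last n)).erase j0,
        l j * q j * (deriv (deriv φ) (ψ (βmax * q j)))⁻¹) -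
        l (Fin.last n) * q (Fin.last n) *
          (deriv (deriv φ) (ψ (βmax * q (Fin.last n))))⁻¹)) := by
    apply Tendsto.sub
    · apply tendsto_finset_sum
      intro j hj
      have hjne : j ≠ j0 := (Finset.mem_erase.mp hj).1
      exact (claimA j (hqlt j hjne)).const_mul _
    · exact (claimA (Fin.last n) (hqlt _ (Ne.symm hj0ne))).const_mul _
  -- the main term tends to -∞
  have hmain : Tendsto (fun β => l j0 * q j0 * deriv ψ (β * q j0)) L atBot :=
    claimB.const_mul_atBot (mul_pos (hl j0) (hqpos j0))
  have hle : ∀ᶠ β in L,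
      (∑ j ∈ (Finset.univ.erase (Fin.last n)).erase j0,
        l j * q j * deriv ψ (β * q j)) -
        l (Fin.last n) * q (Fin.last n) * deriv ψ (β * q (Fin.last n)) ≤
      ((∑ j ∈ (Finset.univ.erase (Fin.last n)).erase j0,
        l j * q j * (deriv (deriv φ) (ψ (βmax * q j)))⁻¹) -
        l (Fin.last n) * q (Fin.last n) *
          (deriv (deriv φ) (ψ (βmax * q (Fin.last n))))⁻¹) + 1 := by
    have := hrest (Iic_mem_nhds (lt_add_one _))
    filter_upwards [this] with β hβ
    exact hβ
  have hsum := tendsto_atBot_add_right_of_ge' L _ hmain hle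
  exact hsum.congr fun β => (hGsplit β).symm
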